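/- For α = β = 0, μ ≥ 0, n ∈ ℕ, and x ≥ 1/2, the second central moment of the modified operator is bounded by that of the unmodified one: (1 + 2μ e_μ(−n r_n(x))/e_μ(n r_n(x))) x/n − (1/n²)(5/12 + μ e_μ(−n r_n(x))/e_μ(n r_n(x))) ≤ (1 + 2μ e_μ(−nx)/e_μ(nx)) x/n + 1/(3n²). -/

import Mathlib

noncomputable section

/-- θ_k = 0 if k even, 1 if k odd. -/
def theta (k : ℕ) : ℝ := if Even k then 0 else 1

/-- Dunkl coefficients γ_μ(n). -/
def gammaD (mu : ℝ) (n : ℕ) : ℝ :=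
  if Even n then
    2 ^ n * (Nat.factorial (n / 2)) * Real.Gamma ((n / 2 : ℕ) + mu + 1 / 2) / Real.Gamma (mu + 1 / 2)
  else
    2 ^ n * (Nat.factorial (n / 2)) * Real.Gamma ((n / 2 : ℕ) + mu + 3 / 2) / Real.Gamma (mu + 1 / 2)

/-- Dunkl exponential e_μ(x) = Σ xⁿ/γ_μ(n). -/
def eD (mu x : ℝ) : ℝ := ∑' n : ℕ, x ^ n / gammaD mu n

/-- r_n(x) = x - 1/(2n). -/
def rn (n : ℕ) (x : ℝ) : ℝ := x - 1 / (2 * n)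

/-- Modified Dunkl Szász–Mirakjan–Kantorovich operator K_n. -/
def Kn (mu : ℝ) (n : ℕ) (f : ℝ → ℝ) (x : ℝ) : ℝ :=
  (n / eD mu (n * rn n x)) * ∑' k : ℕ, (n * rn n x) ^ k / gammaD mu k *
    ∫ t in (((k : ℝ) + 2 * mu * theta k) / n)..(((k : ℝ) + 1 + 2 * mu * theta k) / n), f t

/-- Stancu-type modified Dunkl Szász–Kantorovich operator K_n^*. -/
def KnStar (mu a b : ℝ) (n : ℕ) (f : ℝ → ℝ) (x : ℝ) : ℝ :=
  (n / eD mu (n * rn n x)) * ∑' k : ℕ, (n * rn n x) ^ k / gammaD mu k *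
    ∫ t in (((k : ℝ) + 2 * mu * theta k) / n)..(((k : ℝ) + 1 + 2 * mu * theta k) / n),
      f ((n * t + a) / (n + b))

/-- Dunkl Szász–Kantorovich–Stancu operator T_n^*. -/
def TnStar (mu a b : ℝ) (n : ℕ) (f : ℝ → ℝ) (x : ℝ) : ℝ :=
  (n / eD mu (n * x)) * ∑' k : ℕ, (n * x) ^ k / gammaD mu k *
    ∫ t in (((k : ℝ) + 2 * mu * theta k) / n)..(((k : ℝ) + 1 + 2 * mu * theta k) / n),
      f ((n * t + a) / (n + b))

/-- Modulus of continuity of f on [0,∞). -/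
def modCont (f : ℝ → ℝ) (d : ℝ) : ℝ :=
  sSup {y | ∃ t s : ℝ, 0 ≤ t ∧ 0 ≤ s ∧ |t - s| ≤ d ∧ y = |f t - f s|}

namespace DunklAux

open Real Filter Set

lemma theta_nonneg (k : ℕ) : 0 ≤ theta k := by unfold theta; split <;> norm_num

lemma theta_zero : theta 0 = 0 := by simp [theta]

lemma gammaD_pos {mu : ℝ} (hmu : 0 ≤ mu) (k : ℕ) : 0 < gammaD mu k := by
  have h1 : 0 < Real.Gamma (mu + 1 / 2) := Real.Gamma_pos_of_pos (by linarith)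
  have h2 : 0 < Real.Gamma (((k / 2 : ℕ) : ℝ) + mu + 1 / 2) :=
    Real.Gamma_pos_of_pos (by positivity)
  have h3 : 0 < Real.Gamma (((k / 2 : ℕ) : ℝ) + mu + 3 / 2) :=
    Real.Gamma_pos_of_pos (by positivity)
  unfold gammaD
  split <;> positivity

lemma gammaD_zero {mu : ℝ} (hmu : 0 ≤ mu) : gammaD mu 0 = 1 := by
  have h1 : 0 < Real.Gamma (mu + 1 / 2) := Real.Gamma_pos_of_pos (by linarith)
  unfold gammaD
  simp [Nat.factorial]
  exact (Real.Gamma_pos_of_pos (by linarith : (0:ℝ) < mu + 2⁻¹)).ne'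

lemma gammaD_succ {mu : ℝ} (hmu : 0 ≤ mu) (k : ℕ) :
    gammaD mu (k + 1) = gammaD mu k * (((k : ℝ) + 1) + 2 * mu * theta (k + 1)) := by
  have h1 : Real.Gamma (mu + 1 / 2) ≠ 0 := (Real.Gamma_pos_of_pos (by linarith)).ne'
  rcases Nat.even_or_odd k with ⟨j, rfl⟩ | ⟨j, rfl⟩
  · -- k = j + j, k+1 odd
    have he : Even (j + j) := ⟨j, rfl⟩
    have ho : ¬ Even (j + j + 1) := by simp [Nat.even_add_one, he]
    have hd1 : (j + j + 1) / 2 = j := by omega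
    have hd2 : (j + j) / 2 = j := by omega
    unfold gammaD theta
    rw [if_neg ho, if_pos he, if_neg ho, hd1, hd2]
    have hg : Real.Gamma ((j : ℝ) + mu + 3 / 2) =
        ((j : ℝ) + mu + 1 / 2) * Real.Gamma ((j : ℝ) + mu + 1 / 2) := by
      rw [show ((j : ℝ) + mu + 3 / 2) = ((j : ℝ) + mu + 1 / 2) + 1 by ring]
      exact Real.Gamma_add_one (by positivity)
    rw [hg]
    push_cast
    field_simp
    ring
  · -- k = 2j+1, k+1 = 2j+2 even
    have ho : ¬ Even (2 * j + 1) := by simp [Nat.even_add_one, Nat.even_mul]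
    have he : Even (2 * j + 1 + 1) := by refine ⟨j + 1, by omega⟩
    have hd1 : (2 * j + 1 + 1) / 2 = j + 1 := by omega
    have hd2 : (2 * j + 1) / 2 = j := by omega
    unfold gammaD theta
    rw [if_pos he, if_neg ho, if_pos he, hd1, hd2]
    have hg : (((j + 1 : ℕ) : ℝ)) + mu + 1 / 2 = ((j : ℕ) : ℝ) + mu + 3 / 2 := by push_cast; ring
    rw [hg, Nat.factorial_succ]
    push_cast
    field_simp
    ring

lemma factorial_le_gammaD {mu : ℝ} (hmu : 0 ≤ mu) (k : ℕ) :
    (k.factorial : ℝ) ≤ gammaD mu k := by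
  induction k with
  | zero => simp [gammaD_zero hmu]
  | succ k ih =>
      rw [gammaD_succ hmu, Nat.factorial_succ]
      push_cast
      have h1 : ((k : ℝ) + 1) ≤ ((k : ℝ) + 1) + 2 * mu * theta (k + 1) := by
        have := theta_nonneg (k + 1); nlinarith
      have h2 : (0:ℝ) < (k.factorial : ℝ) := by positivity
      have h3 : (0:ℝ) ≤ (k : ℝ) + 1 := by positivity
      calc ((k : ℝ) + 1) * (k.factorial : ℝ) ≤ ((k : ℝ) + 1) * gammaD mu k := by
            exact mul_le_mul_of_nonneg_left ih h3
        _ ≤ (((k : ℝ) + 1) + 2 * mu * theta (k + 1)) * gammaD mu k := by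
            exact mul_le_mul_of_nonneg_right h1 (gammaD_pos hmu k).le
        _ = gammaD mu k * (((k : ℝ) + 1) + 2 * mu * theta (k + 1)) := by ring

end DunklAux
namespace DunklAux

lemma summable_eD {mu : ℝ} (hmu : 0 ≤ mu) (y : ℝ) :
    Summable (fun k : ℕ => y ^ k / gammaD mu k) := by
  apply Summable.of_norm_bounded (g := fun k : ℕ => |y| ^ k / (k.factorial : ℝ))
    (Real.summable_pow_div_factorial |y|)
  intro k
  rw [Real.norm_eq_abs, abs_div, abs_pow, abs_of_pos (gammaD_pos hmu k)]
  exact div_le_div_of_nonneg_left (by positivity) (by positivity) (factorial_le_gammaD hmu k)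

lemma summable_deriv_aux {mu : ℝ} (hmu : 0 ≤ mu) (M : ℝ) :
    Summable (fun k : ℕ => (k : ℝ) * (|M| + 1) ^ (k - 1) / (k.factorial : ℝ)) := by
  apply Summable.of_norm_bounded (g := fun k : ℕ => (2 * (|M| + 2)) ^ k / (k.factorial : ℝ))
    (Real.summable_pow_div_factorial _)
  intro k
  have hM : (0:ℝ) ≤ |M| := abs_nonneg M
  have h1 : (k : ℝ) ≤ 2 ^ k := by
    calc (k : ℝ) ≤ (2 ^ k : ℕ) := by exact_mod_cast (Nat.lt_two_pow_self (n := k)).le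
      _ = 2 ^ k := by push_cast; ring
  have h2 : (|M| + 1) ^ (k - 1) ≤ (|M| + 2) ^ k := by
    calc (|M| + 1) ^ (k - 1) ≤ (|M| + 2) ^ (k - 1) := by
          apply pow_le_pow_left₀ (by linarith) (by linarith)
      _ ≤ (|M| + 2) ^ k := by
          apply pow_le_pow_right₀ (by linarith) (Nat.sub_le k 1)
  rw [Real.norm_eq_abs, abs_div, abs_of_nonneg (by positivity : (0:ℝ) ≤ (k:ℝ) * (|M|+1)^(k-1)),
    abs_of_pos (by positivity : (0:ℝ) < (k.factorial : ℝ))]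
  have h3 : (k : ℝ) * (|M| + 1) ^ (k - 1) ≤ (2 * (|M| + 2)) ^ k := by
    rw [mul_pow]
    exact mul_le_mul h1 h2 (by positivity) (by positivity)
  apply div_le_div₀ (by positivity) h3 (by positivity) (le_refl _)

/-- derivative series -/
def SD (mu y : ℝ) : ℝ := ∑' k : ℕ, (k : ℝ) * y ^ (k - 1) / gammaD mu k

lemma hasDerivAt_eD {mu : ℝ} (hmu : 0 ≤ mu) (y : ℝ) :
    HasDerivAt (eD mu) (SD mu y) y := by
  have key : HasDerivAt (fun z : ℝ => ∑' k : ℕ, z ^ k / gammaD mu k)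
      (∑' k : ℕ, (k : ℝ) * y ^ (k - 1) / gammaD mu k) y := by
    apply hasDerivAt_tsum_of_isPreconnected
      (u := fun k : ℕ => (k : ℝ) * (|y| + 1) ^ (k - 1) / (k.factorial : ℝ))
      (summable_deriv_aux hmu y) (Metric.isOpen_ball) (convex_ball (0:ℝ) (|y|+1)).isPreconnected
      (g' := fun k z => (k : ℝ) * z ^ (k - 1) / gammaD mu k)
      (fun k z _ => (hasDerivAt_pow k z).div_const _) ?_ ?_ (summable_eD hmu y) ?_
    · intro k z hz
      have hz' : |z| < |y| + 1 := by
        simpa [Real.dist_eq] using hz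
      rw [Real.norm_eq_abs, abs_div, abs_of_pos (gammaD_pos hmu k), abs_mul, abs_pow,
        Nat.abs_cast]
      apply div_le_div₀ (by positivity) ?_ (by positivity) (factorial_le_gammaD hmu k)
      apply mul_le_mul_of_nonneg_left ?_ (by positivity)
      exact pow_le_pow_left₀ (abs_nonneg z) hz'.le _
    · simpa [Real.dist_eq] using (by linarith [abs_nonneg y] : |y| < |y| + 1)
    · simpa [Real.dist_eq] using (by linarith [abs_nonneg y] : |y| < |y| + 1)
  exact key

end DunklAux
namespace DunklAux

lemma summable_mid {mu : ℝ} (hmu : 0 ≤ mu) (y : ℝ) :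
    Summable (fun k : ℕ => ((k : ℝ) + 2 * mu * theta k) * y ^ k / gammaD mu k) := by
  apply Summable.of_norm_bounded
    (g := fun k : ℕ => (1 + 2 * mu) * ((2 * (|y| + 1)) ^ k / (k.factorial : ℝ)))
    ((Real.summable_pow_div_factorial _).mul_left _)
  intro k
  have h1 : (k : ℝ) ≤ 2 ^ k := by
    calc (k : ℝ) ≤ ((2 ^ k : ℕ) : ℝ) := by exact_mod_cast (Nat.lt_two_pow_self (n := k)).le
      _ = 2 ^ k := by push_cast; ring
  have h2 : (0:ℝ) ≤ theta k := theta_nonneg k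
  have h3 : theta k ≤ 1 := by unfold theta; split <;> norm_num
  have h4 : (1:ℝ) ≤ 2 ^ k := by exact one_le_pow₀ (by norm_num)
  have hc : |(k : ℝ) + 2 * mu * theta k| ≤ (1 + 2 * mu) * 2 ^ k := by
    rw [abs_of_nonneg (by positivity)]
    nlinarith
  have hy : |y| ^ k ≤ (|y| + 1) ^ k := pow_le_pow_left₀ (abs_nonneg y) (by linarith) k
  rw [Real.norm_eq_abs, abs_div, abs_of_pos (gammaD_pos hmu k), abs_mul, abs_pow]
  calc |(k : ℝ) + 2 * mu * theta k| * |y| ^ k / gammaD mu k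
      ≤ ((1 + 2 * mu) * 2 ^ k) * (|y| + 1) ^ k / (k.factorial : ℝ) := by
        apply div_le_div₀ (by positivity) ?_ (by positivity) (factorial_le_gammaD hmu k)
        exact mul_le_mul hc hy (by positivity) (by positivity)
    _ = (1 + 2 * mu) * ((2 * (|y| + 1)) ^ k / (k.factorial : ℝ)) := by
        rw [mul_pow]; ring

lemma summable_theta {mu : ℝ} (hmu : 0 ≤ mu) (y : ℝ) :
    Summable (fun k : ℕ => 2 * mu * theta k * y ^ k / gammaD mu k) := by
  apply Summable.of_norm_bounded
    (g := fun k : ℕ => (2 * mu) * (|y| ^ k / (k.factorial : ℝ)))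
    ((Real.summable_pow_div_factorial _).mul_left _)
  intro k
  have h2 : (0:ℝ) ≤ theta k := theta_nonneg k
  have h3 : theta k ≤ 1 := by unfold theta; split <;> norm_num
  rw [Real.norm_eq_abs, abs_div, abs_of_pos (gammaD_pos hmu k), abs_mul, abs_pow, abs_mul,
    abs_of_nonneg (by positivity : (0:ℝ) ≤ 2 * mu), abs_of_nonneg h2]
  calc 2 * mu * theta k * |y| ^ k / gammaD mu k
      ≤ (2 * mu * 1) * |y| ^ k / (k.factorial : ℝ) := by
        apply div_le_div₀ (by positivity) ?_ (by positivity) (factorial_le_gammaD hmu k)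
        exact mul_le_mul_of_nonneg_right (by nlinarith) (by positivity)
    _ = (2 * mu) * (|y| ^ k / (k.factorial : ℝ)) := by ring

/-- the fundamental Dunkl ODE identity -/
lemma eD_ode {mu : ℝ} (hmu : 0 ≤ mu) (y : ℝ) :
    y * SD mu y = y * eD mu y - mu * (eD mu y - eD mu (-y)) := by
  have hS1 := summable_eD hmu y
  have hS1n := summable_eD hmu (-y)
  have hSm := summable_mid hmu y
  have hSt := summable_theta hmu y
  -- Step A : y * SD = ∑ k y^k/γ
  have hA : y * SD mu y = ∑' k : ℕ, (k : ℝ) * y ^ k / gammaD mu k := by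
    rw [SD, ← tsum_mul_left]
    apply tsum_congr
    intro k
    cases k with
    | zero => simp
    | succ k => rw [Nat.add_sub_cancel, pow_succ]; ring
  -- Step C : y * eD = ∑ (k + 2muθ) y^k/γ
  have hC : y * eD mu y = ∑' k : ℕ, ((k : ℝ) + 2 * mu * theta k) * y ^ k / gammaD mu k := by
    have hC1 : y * eD mu y = ∑' k : ℕ, y ^ (k + 1) / gammaD mu k := by
      rw [eD, ← tsum_mul_left]
      apply tsum_congr
      intro k
      rw [pow_succ]; ring
    rw [hC1, hSm.tsum_eq_zero_add]
    have h0 : ((0 : ℕ) : ℝ) + 2 * mu * theta 0 = 0 := by simp [theta_zero]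
    rw [show (((0:ℕ):ℝ) + 2 * mu * theta 0) * y ^ 0 / gammaD mu 0 = 0 by rw [h0]; ring]
    rw [zero_add]
    apply tsum_congr
    intro k
    have hrec := gammaD_succ hmu k
    have hmpos : (0:ℝ) < ((k : ℝ) + 1) + 2 * mu * theta (k + 1) := by
      have := theta_nonneg (k + 1); positivity
    rw [hrec]
    have hg0 : gammaD mu k ≠ 0 := (gammaD_pos hmu k).ne'
    push_cast
    field_simp
  -- Step B : mu * (eD y - eD (-y)) = ∑ 2 mu θ y^k / γ
  have hB : mu * (eD mu y - eD mu (-y)) = ∑' k : ℕ, 2 * mu * theta k * y ^ k / gammaD mu k := by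
    rw [eD, eD, ← hS1.tsum_sub hS1n, ← tsum_mul_left]
    apply tsum_congr
    intro k
    rcases Nat.even_or_odd k with he | ho
    · rw [he.neg_pow, theta, if_pos he]
      ring
    · rw [ho.neg_pow, theta, if_neg (Nat.not_even_iff_odd.mpr ho)]
      ring
  rw [hA, hC, hB, ← hSm.tsum_sub hSt]
  apply tsum_congr
  intro k
  ring

end DunklAux
namespace DunklAux

lemma eD_zero {mu : ℝ} (hmu : 0 ≤ mu) : eD mu 0 = 1 := by
  rw [eD, tsum_eq_single 0 (fun k hk => by
    rw [zero_pow hk, zero_div])]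
  simp [gammaD_zero hmu]

lemma one_le_eD {mu : ℝ} (hmu : 0 ≤ mu) {y : ℝ} (hy : 0 ≤ y) : 1 ≤ eD mu y := by
  have h := (summable_eD hmu y).le_tsum 0
    (fun k _ => div_nonneg (pow_nonneg hy k) (gammaD_pos hmu k).le)
  simp [gammaD_zero hmu] at h
  exact h

lemma eD_pos {mu : ℝ} (hmu : 0 ≤ mu) {y : ℝ} (hy : 0 ≤ y) : 0 < eD mu y :=
  lt_of_lt_of_le one_pos (one_le_eD hmu hy)

lemma eD_neg_le {mu : ℝ} (hmu : 0 ≤ mu) {y : ℝ} (hy : 0 ≤ y) : eD mu (-y) ≤ eD mu y := by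
  rw [eD, eD]
  apply Summable.tsum_le_tsum ?_ (summable_eD hmu (-y)) (summable_eD hmu y)
  intro k
  have hg := gammaD_pos hmu k
  rw [div_le_div_iff_of_pos_right hg]
  rcases Nat.even_or_odd k with he | ho
  · rw [he.neg_pow]
  · rw [ho.neg_pow]
    have : 0 ≤ y ^ k := pow_nonneg hy k
    linarith

/-- derivative of z ↦ eD mu (-z) -/
lemma hasDerivAt_eD_neg {mu : ℝ} (hmu : 0 ≤ mu) (y : ℝ) :
    HasDerivAt (fun z : ℝ => eD mu (-z)) (-SD mu (-y)) y := by
  have h := (hasDerivAt_eD hmu (-y)).comp y (hasDerivAt_neg y)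
  simp at h
  exact h

lemma one_le_eD_mul {mu : ℝ} (hmu : 0 ≤ mu) {y : ℝ} (hy : 0 ≤ y) :
    1 ≤ eD mu y * eD mu (-y) := by
  set P : ℝ → ℝ := fun z => eD mu z * eD mu (-z) with hP
  have hD : ∀ z : ℝ, HasDerivAt P (SD mu z * eD mu (-z) + eD mu z * (-SD mu (-z))) z := by
    intro z
    exact (hasDerivAt_eD hmu z).mul (hasDerivAt_eD_neg hmu z)
  have hmono : MonotoneOn P (Set.Ici (0:ℝ)) := by
    apply monotoneOn_of_deriv_nonneg (convex_Ici 0)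
    · exact fun z _ => ((hD z).differentiableAt).continuousAt.continuousWithinAt
    · intro z hz
      exact ((hD z).differentiableAt).differentiableWithinAt
    · intro z hz
      rw [interior_Ici] at hz
      rw [(hD z).deriv]
      -- use the ODE identity
      have h1 := eD_ode hmu z
      have h2 := eD_ode hmu (-z)
      -- z * (expr) = mu * (eD z - eD (-z))^2
      have key : z * (SD mu z * eD mu (-z) + eD mu z * (-SD mu (-z)))
          = mu * (eD mu z - eD mu (-z))^2 := by
        have h2' : z * SD mu (-z) = z * eD mu (-z) - mu * (eD mu z - eD mu (-z)) := by
          have : (-z) * SD mu (-z) = (-z) * eD mu (-z) - mu * (eD mu (-z) - eD mu (-(-z))) := h2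
          rw [neg_neg] at this
          linear_combination (-1 : ℝ) * this
        linear_combination eD mu (-z) * h1 - eD mu z * h2'
      have hN : 0 ≤ mu * (eD mu z - eD mu (-z))^2 :=
        mul_nonneg hmu (sq_nonneg _)
      have hz' : (0:ℝ) < z := hz
      nlinarith [key, hN, hz']
  have h0 : P 0 = 1 := by simp [hP, neg_zero, eD_zero hmu]
  have := hmono (Set.self_mem_Ici) (Set.mem_Ici.mpr hy) hy
  rw [h0] at this
  exact this

lemma eD_neg_pos {mu : ℝ} (hmu : 0 ≤ mu) {y : ℝ} (hy : 0 ≤ y) : 0 < eD mu (-y) := by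
  have h1 := one_le_eD_mul hmu hy
  have h2 := eD_pos hmu hy
  nlinarith

end DunklAux
namespace DunklAux

/-- auxiliary square-root quantity -/
def sQ (mu y : ℝ) : ℝ := Real.sqrt ((2 * y - 1) ^ 2 + 4 * mu ^ 2 + 3)

/-- the supersolution -/
def rho (mu y : ℝ) : ℝ := (sQ mu y - (2 * y - 1)) / (2 * mu)

lemma sQ_pos (mu y : ℝ) : 0 < sQ mu y := Real.sqrt_pos.mpr (by positivity)

lemma sQ_sq (mu y : ℝ) : sQ mu y ^ 2 = (2 * y - 1) ^ 2 + 4 * mu ^ 2 + 3 :=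
  Real.sq_sqrt (by positivity)

lemma hasDerivAt_sQ (mu y : ℝ) :
    HasDerivAt (sQ mu) (4 * (2 * y - 1) / (2 * sQ mu y)) y := by
  have hin : HasDerivAt (fun z : ℝ => (2 * z - 1) ^ 2 + 4 * mu ^ 2 + 3)
      (4 * (2 * y - 1)) y := by
    have h1 : HasDerivAt (fun z : ℝ => 2 * z - 1) 2 y := by
      simpa using ((hasDerivAt_id y).const_mul 2).sub_const 1
    have h3 := (h1.pow 2).add_const (4 * mu ^ 2 + 3)
    have he : (fun z : ℝ => (2 * z - 1) ^ 2 + (4 * mu ^ 2 + 3))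
        = fun z : ℝ => (2 * z - 1) ^ 2 + 4 * mu ^ 2 + 3 := by
      funext z; ring
    simp only [Pi.pow_apply] at h3
    rw [he] at h3
    refine h3.congr_deriv ?_
    ring
  have := hin.sqrt (by positivity)
  exact this

lemma hasDerivAt_rho {mu : ℝ} (hmu : 0 < mu) (y : ℝ) :
    HasDerivAt (rho mu) ((4 * (2 * y - 1) / (2 * sQ mu y) - 2) / (2 * mu)) y := by
  have h1 : HasDerivAt (fun z : ℝ => sQ mu z - (2 * z - 1))
      (4 * (2 * y - 1) / (2 * sQ mu y) - 2) y := by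
    apply (hasDerivAt_sQ mu y).sub
    simpa using ((hasDerivAt_id y).const_mul 2).sub_const 1
  exact h1.div_const _

/-- the supersolution strict inequality -/
lemma rho_supersol {mu : ℝ} (hmu : 0 < mu) {y : ℝ} (hy : 0 < y) :
    0 < y * ((4 * (2 * y - 1) / (2 * sQ mu y) - 2) / (2 * mu)) + 2 * y * rho mu y
      - mu * (1 - (rho mu y) ^ 2) := by
  set s := sQ mu y with hs
  have hs0 : 0 < s := sQ_pos mu y
  have hs2 : s ^ 2 = (2 * y - 1) ^ 2 + 4 * mu ^ 2 + 3 := sQ_sq mu y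
  set c : ℝ := 2 * y - 1 with hc
  -- multiply target by 4 mu^2 s
  have hpoly : (y * ((4 * c / (2 * s) - 2) / (2 * mu)) + 2 * y * rho mu y
      - mu * (1 - (rho mu y) ^ 2)) * (4 * mu ^ 2 * s)
      = mu * (4 * y * c - 4 * y * s + 4 * y * s ^ 2 - 4 * y * s * c - 4 * mu ^ 2 * s
          + s * (s - c) ^ 2) := by
    rw [rho, ← hs, ← hc]
    field_simp
    ring
  have hred : mu * (4 * y * c - 4 * y * s + 4 * y * s ^ 2 - 4 * y * s * c - 4 * mu ^ 2 * s
        + s * (s - c) ^ 2) = mu * (2 * (s - c) ^ 2 + 2 * c + s) := by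
    have h4y : 4 * y = 2 * c + 2 := by rw [hc]; ring
    linear_combination (mu * s) * hs2
  have hposE : 0 < mu * (2 * (s - c) ^ 2 + 2 * c + s) := by
    apply mul_pos hmu
    rcases le_or_gt 0 c with hc0 | hc0
    · nlinarith [sq_nonneg (s - c)]
    · -- c < 0 : (s-c)^2 ≥ s^2 ≥ 3, c > -1
      have hcy : -1 < c := by rw [hc]; linarith
      have h1 : 0 ≤ (-c) * s := mul_nonneg (by linarith) hs0.le
      nlinarith [hs2, sq_nonneg c, sq_nonneg mu, h1, hcy, hs0]
  have hK : (0:ℝ) < 4 * mu ^ 2 * s := by positivity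
  have hTK : 0 < (y * ((4 * c / (2 * s) - 2) / (2 * mu)) + 2 * y * rho mu y
      - mu * (1 - (rho mu y) ^ 2)) * (4 * mu ^ 2 * s) := by
    rw [hpoly, hred]; exact hposE
  rcases mul_pos_iff.mp hTK with ⟨h, _⟩ | ⟨_, h⟩
  · exact h
  · linarith

end DunklAux
namespace DunklAux

lemma rho_zero_gt_one {mu : ℝ} (hmu : 0 < mu) : 1 < rho mu 0 := by
  rw [rho, sQ]
  have h1 : 2 * mu < Real.sqrt ((2 * (0:ℝ) - 1) ^ 2 + 4 * mu ^ 2 + 3) := by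
    rw [show ((2 * (0:ℝ) - 1) ^ 2 + 4 * mu ^ 2 + 3) = 4 * mu ^ 2 + 4 by ring]
    rw [Real.lt_sqrt (by positivity)]
    nlinarith
  rw [lt_div_iff₀ (by positivity)]
  nlinarith

/-- comparison lemma : the ratio stays below the supersolution -/
lemma eD_neg_lt_rho_mul {mu : ℝ} (hmu : 0 < mu) {y : ℝ} (hy : 0 ≤ y) :
    eD mu (-y) < rho mu y * eD mu y := by
  by_contra hcon
  push_neg at hcon
  -- hcon : rho mu y * eD mu y ≤ eD mu (-y)
  set D : ℝ → ℝ := fun z => rho mu z * eD mu z - eD mu (-z) with hD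
  have hmu' : 0 ≤ mu := hmu.le
  have hDd : ∀ z : ℝ, HasDerivAt D
      (((4 * (2 * z - 1) / (2 * sQ mu z) - 2) / (2 * mu)) * eD mu z
        + rho mu z * SD mu z + SD mu (-z)) z := by
    intro z
    have h1 := (hasDerivAt_rho hmu z).mul (hasDerivAt_eD hmu' z)
    have h2 := h1.sub (hasDerivAt_eD_neg hmu' z)
    refine h2.congr_deriv ?_
    ring
  have hDcont : Continuous D := by
    apply continuous_iff_continuousAt.mpr
    intro z
    exact ((hDd z).differentiableAt).continuousAt
  have hD0 : 0 < D 0 := by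
    simp only [hD, neg_zero, eD_zero hmu']
    have := rho_zero_gt_one hmu
    nlinarith
  have hDb : D y ≤ 0 := by simp only [hD]; linarith
  -- consider first crossing point
  set T : Set ℝ := {z | z ∈ Set.Icc 0 y ∧ D z ≤ 0} with hT
  have hTne : T.Nonempty := ⟨y, ⟨hy, le_refl y⟩, hDb⟩
  have hTbd : BddBelow T := ⟨0, fun z hz => hz.1.1⟩
  have hTcl : IsClosed T := by
    have : T = Set.Icc 0 y ∩ D ⁻¹' (Set.Iic 0) := by
      ext z; simp [hT, Set.mem_Icc]
    rw [this]
    exact isClosed_Icc.inter (IsClosed.preimage hDcont isClosed_Iic)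
  set y0 : ℝ := sInf T with hy0
  have hy0T : y0 ∈ T := hTcl.csInf_mem hTne hTbd
  have hy00 : 0 ≤ y0 := hy0T.1.1
  have hy0ne : y0 ≠ 0 := by
    intro h
    rw [h] at hy0T
    linarith [hy0T.2]
  have hy0pos : 0 < y0 := lt_of_le_of_ne hy00 (Ne.symm hy0ne)
  have hbelow : ∀ z, 0 ≤ z → z < y0 → 0 < D z := by
    intro z hz0 hzlt
    by_contra hzc
    push_neg at hzc
    have hzT : z ∈ T := ⟨⟨hz0, le_trans hzlt.le hy0T.1.2⟩, hzc⟩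
    have := csInf_le hTbd hzT
    rw [← hy0] at this
    linarith
  -- D y0 = 0 by continuity from the left
  have hDy0 : D y0 = 0 := by
    refine le_antisymm hy0T.2 ?_
    have htend : Filter.Tendsto D (nhdsWithin y0 (Set.Iio y0)) (nhds (D y0)) :=
      (hDcont.continuousAt).continuousWithinAt
    have hev : ∀ᶠ z in nhdsWithin y0 (Set.Iio y0), 0 ≤ D z := by
      filter_upwards [Ioo_mem_nhdsLT_of_mem (Set.mem_Ioc.mpr ⟨hy0pos, le_refl y0⟩)]
        with z hz
      exact (hbelow z hz.1.le hz.2).le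
    exact ge_of_tendsto htend hev
  -- derivative at y0 is positive
  have hgf : eD mu (-y0) = rho mu y0 * eD mu y0 := by
    have : D y0 = 0 := hDy0
    simp only [hD] at this
    linarith
  set d : ℝ := ((4 * (2 * y0 - 1) / (2 * sQ mu y0) - 2) / (2 * mu)) * eD mu y0
      + rho mu y0 * SD mu y0 + SD mu (-y0) with hd
  have hdpos : 0 < d := by
    have hode1 := eD_ode hmu' y0
    have hode2 : y0 * SD mu (-y0) = y0 * eD mu (-y0) + mu * (eD mu (-y0) - eD mu y0) := by
      have h := eD_ode hmu' (-y0)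
      rw [neg_neg] at h
      linear_combination (-1 : ℝ) * h
    have hQ := rho_supersol hmu hy0pos
    have hF1 : 1 ≤ eD mu y0 := one_le_eD hmu' hy00
    -- y0 * d = eD mu y0 * Q  where Q is the supersolution expression
    have hyd : y0 * d = eD mu y0 * (y0 * ((4 * (2 * y0 - 1) / (2 * sQ mu y0) - 2) / (2 * mu))
        + 2 * y0 * rho mu y0 - mu * (1 - (rho mu y0) ^ 2)) := by
      rw [hd]
      calc y0 * (((4 * (2 * y0 - 1) / (2 * sQ mu y0) - 2) / (2 * mu)) * eD mu y0
          + rho mu y0 * SD mu y0 + SD mu (-y0))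
          = (y0 * ((4 * (2 * y0 - 1) / (2 * sQ mu y0) - 2) / (2 * mu))) * eD mu y0
            + rho mu y0 * (y0 * SD mu y0) + y0 * SD mu (-y0) := by ring
        _ = (y0 * ((4 * (2 * y0 - 1) / (2 * sQ mu y0) - 2) / (2 * mu))) * eD mu y0
            + rho mu y0 * (y0 * eD mu y0 - mu * (eD mu y0 - eD mu (-y0)))
            + (y0 * eD mu (-y0) + mu * (eD mu (-y0) - eD mu y0)) := by rw [hode1, hode2]
        _ = _ := by rw [hgf]; ring
    have : 0 < y0 * d := by
      rw [hyd]
      exact mul_pos (by linarith) hQ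
    nlinarith [this, hy0pos]
  -- contradiction via slope
  have hslope := hasDerivAt_iff_tendsto_slope.mp (hDd y0)
  rw [← hd] at hslope
  have hslope' : Filter.Tendsto (slope D y0) (nhdsWithin y0 (Set.Iio y0)) (nhds d) :=
    hslope.mono_left (nhdsWithin_mono y0 (fun z hz => by
      simp only [Set.mem_compl_iff, Set.mem_singleton_iff]
      exact ne_of_lt hz))
  have hev1 : ∀ᶠ z in nhdsWithin y0 (Set.Iio y0), 0 < slope D y0 z :=
    hslope'.eventually (eventually_gt_nhds hdpos)
  have hev2 : ∀ᶠ z in nhdsWithin y0 (Set.Iio y0), z ∈ Set.Ioo 0 y0 :=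
    Filter.eventually_of_mem (Ioo_mem_nhdsLT_of_mem (Set.mem_Ioc.mpr ⟨hy0pos, le_refl y0⟩))
      (fun z hz => hz)
  have : ∃ z, z ∈ Set.Ioo 0 y0 ∧ 0 < slope D y0 z := by
    rcases (hev1.and hev2).exists with ⟨z, h1, h2⟩
    exact ⟨z, h2, h1⟩
  rcases this with ⟨z, hz, hsl⟩
  rw [slope_def_field] at hsl
  have hDz : 0 < D z := hbelow z hz.1.le hz.2
  have hzy : z - y0 < 0 := by linarith [hz.2]
  rw [hDy0] at hsl
  -- (D z - 0)/(z - y0) > 0 with z - y0 < 0 gives D z < 0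
  have : D z < 0 := by
    by_contra hh
    push_neg at hh
    have := div_nonpos_of_nonneg_of_nonpos (by linarith : (0:ℝ) ≤ D z - 0) hzy.le
    linarith
  linarith

end DunklAux
namespace DunklAux

lemma hprime_ge {mu : ℝ} (hmu : 0 < mu) {z R : ℝ} (hz : 0 < z) (hR0 : 0 ≤ R)
    (hR1 : R ≤ 1) (hRr : R ≤ rho mu z) :
    0 ≤ 2 * mu * (R * (1 - 2 * z) + mu * (1 - R ^ 2)) + 3 / 2 := by
  rcases le_or_gt z (1 / 2) with hz2 | hz2
  · have h1 : 0 ≤ 2 * mu * (R * (1 - 2 * z)) :=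
      mul_nonneg (by positivity) (mul_nonneg hR0 (by linarith))
    have h2 : 0 ≤ 2 * mu * (mu * (1 - R ^ 2)) := by
      have : 0 ≤ 1 - R ^ 2 := by nlinarith
      positivity
    nlinarith [h1, h2]
  · obtain ⟨s, hs⟩ : ∃ s, sQ mu z = s := ⟨_, rfl⟩
    obtain ⟨r, hr⟩ : ∃ r, rho mu z = r := ⟨_, rfl⟩
    have hs0 : 0 < s := hs ▸ sQ_pos mu z
    have hs2 : s ^ 2 = (2 * z - 1) ^ 2 + 4 * mu ^ 2 + 3 := hs ▸ sQ_sq mu z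
    have hRr' : R ≤ r := hr ▸ hRr
    have hc0 : 0 < 2 * z - 1 := by linarith
    have hrho2 : 2 * mu * r = s - (2 * z - 1) := by
      rw [← hr, ← hs, rho]; field_simp
    have hrr0 : 0 ≤ r := le_trans hR0 hRr'
    have h3 : (2 * mu * r) ^ 2 = (s - (2 * z - 1)) ^ 2 := by rw [hrho2]
    have h5 : 2 * mu ^ 2 * r ^ 2 = (s - (2 * z - 1)) ^ 2 / 2 := by
      linear_combination (1 / 2 : ℝ) * h3
    have h6 : 2 * mu * (2 * z - 1) * r = (2 * z - 1) * (s - (2 * z - 1)) := by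
      linear_combination (2 * z - 1) * hrho2
    have h7 : (2 * z - 1) * (s - (2 * z - 1)) + (s - (2 * z - 1)) ^ 2 / 2
        = 2 * mu ^ 2 + 3 / 2 := by
      linear_combination (1 / 2 : ℝ) * hs2
    have hfac : 0 ≤ 2 * mu * (2 * z - 1) + 2 * mu ^ 2 * (r + R) := by
      have ha : 0 ≤ 2 * mu * (2 * z - 1) := by positivity
      have hb : 0 ≤ 2 * mu ^ 2 * (r + R) :=
        mul_nonneg (by positivity) (by linarith)
      linarith
    have h1 : 0 ≤ (r - R) * (2 * mu * (2 * z - 1) + 2 * mu ^ 2 * (r + R)) :=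
      mul_nonneg (by linarith) hfac
    nlinarith [h1, h5, h6, h7]

lemma key_ineq {mu : ℝ} (hmu : 0 < mu) {y1 y2 : ℝ} (hy1 : 0 ≤ y1) (h12 : y1 ≤ y2) :
    2 * mu * y1 * (eD mu (-y1) / eD mu y1) - 2 * mu * y2 * (eD mu (-y2) / eD mu y2)
      ≤ 3 / 2 * (y2 - y1) := by
  have hmu' : 0 ≤ mu := hmu.le
  set k : ℝ → ℝ := fun z => 2 * mu * z * (eD mu (-z) / eD mu z) + 3 / 2 * z with hk
  -- derivative of k at points z ≥ 0
  have hder : ∀ z : ℝ, 0 ≤ z → HasDerivAt k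
      (2 * mu * (eD mu (-z) / eD mu z) + (2 * mu * z) *
        (((-SD mu (-z)) * eD mu z - eD mu (-z) * SD mu z) / (eD mu z) ^ 2) + 3 / 2) z := by
    intro z hz
    have hFne : eD mu z ≠ 0 := (eD_pos hmu' hz).ne'
    have hq : HasDerivAt (fun w : ℝ => eD mu (-w) / eD mu w)
        (((-SD mu (-z)) * eD mu z - eD mu (-z) * SD mu z) / (eD mu z) ^ 2) z :=
      (hasDerivAt_eD_neg hmu' z).div (hasDerivAt_eD hmu' z) hFne
    have hlin : HasDerivAt (fun w : ℝ => 2 * mu * w) (2 * mu) z := by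
      simpa using (hasDerivAt_id z).const_mul (2 * mu)
    have hmul := hlin.mul hq
    have hfin := hmul.add ((hasDerivAt_id z).const_mul (3 / 2))
    rw [hk]
    refine hfin.congr_deriv ?_
    ring
  have hmono : MonotoneOn k (Set.Icc y1 y2) := by
    apply monotoneOn_of_deriv_nonneg (convex_Icc y1 y2)
    · intro z hz
      exact ((hder z (le_trans hy1 hz.1)).differentiableAt).continuousAt.continuousWithinAt
    · intro z hz
      rw [interior_Icc] at hz
      exact ((hder z (le_trans hy1 hz.1.le)).differentiableAt).differentiableWithinAt
    · intro z hz
      rw [interior_Icc] at hz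
      have hz0 : 0 < z := lt_of_le_of_lt hy1 hz.1
      rw [(hder z hz0.le).deriv]
      set F : ℝ := eD mu z with hF
      set G : ℝ := eD mu (-z) with hG
      have hFpos : 0 < F := eD_pos hmu' hz0.le
      have hGpos : 0 < G := eD_neg_pos hmu' hz0.le
      have hGF : G ≤ F := eD_neg_le hmu' hz0.le
      have hGrho : G < rho mu z * F := eD_neg_lt_rho_mul hmu hz0.le
      set R : ℝ := G / F with hR
      have hR0 : 0 ≤ R := div_nonneg hGpos.le hFpos.le
      have hR1 : R ≤ 1 := by rw [hR, div_le_one hFpos]; exact hGF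
      have hRrho : R ≤ rho mu z := by
        rw [hR, div_le_iff₀ hFpos]
        linarith
      have hbound := hprime_ge hmu hz0 hR0 hR1 hRrho
      -- identity step: rewrite the derivative in terms of R
      have hode1 : z * SD mu z = z * F - mu * (F - G) := by
        have := eD_ode hmu' z
        rw [← hF, ← hG] at this
        linarith
      have hode2 : z * SD mu (-z) = z * G + mu * (G - F) := by
        have h := eD_ode hmu' (-z)
        rw [neg_neg, ← hF, ← hG] at h
        linear_combination (-1 : ℝ) * h
      have hstep : z * ((-SD mu (-z)) * F - G * SD mu z)
          = -2 * z * G * F + mu * (F ^ 2 - G ^ 2) := by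
        linear_combination (-F) * hode2 - G * hode1
      have heq : 2 * mu * (G / F) + (2 * mu * z) *
          (((-SD mu (-z)) * F - G * SD mu z) / F ^ 2) + 3 / 2
          = 2 * mu * (R * (1 - 2 * z) + mu * (1 - R ^ 2)) + 3 / 2 := by
        rw [hR]
        field_simp
        linear_combination (4 * mu) * hstep
      rw [heq]
      exact hbound
  have h := hmono (Set.left_mem_Icc.mpr h12) (Set.right_mem_Icc.mpr h12) h12
  simp only [hk] at h
  linarith

end DunklAux

theorem Kn_le_Tn_central_second (mu : ℝ) (hmu : 0 ≤ mu) (n : ℕ) (hn : 0 < n)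
    (x : ℝ) (hx : 1 / 2 ≤ x)
    (hratio : ∀ y : ℝ, 0 < y → eD mu (-y) / eD mu y ∈ Set.Icc (-1 : ℝ) 1) :
    (1 + 2 * mu * eD mu (-(n * rn n x)) / eD mu (n * rn n x)) * x / n
        - (1 / n ^ 2) * (5 / 12 + mu * eD mu (-(n * rn n x)) / eD mu (n * rn n x))
      ≤ (1 + 2 * mu * eD mu (-(n * x)) / eD mu (n * x)) * x / n + 1 / (3 * n ^ 2) := by
  have hN : (0:ℝ) < (n:ℝ) := by exact_mod_cast hn
  have hN1 : (1:ℝ) ≤ (n:ℝ) := by exact_mod_cast hn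
  have hrn : (n:ℝ) * rn n x = (n:ℝ) * x - 1 / 2 := by
    rw [rn]
    field_simp
  rw [hrn]
  set y1 : ℝ := (n:ℝ) * x - 1 / 2 with hy1def
  set y2 : ℝ := (n:ℝ) * x with hy2def
  have hy1 : 0 ≤ y1 := by
    rw [hy1def]
    nlinarith
  have h12 : y1 ≤ y2 := by rw [hy1def, hy2def]; linarith
  have hy2 : 0 ≤ y2 := le_trans hy1 h12
  have hu1 : 0 < eD mu y1 := DunklAux.eD_pos hmu hy1
  have hu2 : 0 < eD mu y2 := DunklAux.eD_pos hmu hy2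
  rcases eq_or_lt_of_le hmu with hmu0 | hmu0
  · -- mu = 0
    rw [← hmu0]
    have h2 : (0:ℝ) < (n:ℝ) ^ 2 := by positivity
    have h3 : 0 < 1 / (3 * (n:ℝ) ^ 2) := by positivity
    have h4 : 0 < (1 / (n:ℝ) ^ 2) * (5 / 12) := by positivity
    simp only [mul_zero, zero_mul, zero_div, mul_comm, zero_add, add_zero]
    ring_nf
    nlinarith [h3, h4]
  · -- 0 < mu
    have key := DunklAux.key_ineq hmu0 hy1 h12
    have hstep : y2 - y1 = 1 / 2 := by rw [hy1def, hy2def]; ring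
    rw [hstep] at key
    -- key : 2 mu y1 R1 - 2 mu y2 R2 ≤ 3/4
    have hx2 : x = y2 / (n:ℝ) := by rw [hy2def]; field_simp
    have hdiff : (1 + 2 * mu * eD mu (-y2) / eD mu y2) * x / n + 1 / (3 * n ^ 2)
        - ((1 + 2 * mu * eD mu (-y1) / eD mu y1) * x / n
          - (1 / n ^ 2) * (5 / 12 + mu * eD mu (-y1) / eD mu y1))
        = (3 / 2 * (1 / 2) - (2 * mu * y1 * (eD mu (-y1) / eD mu y1)
            - 2 * mu * y2 * (eD mu (-y2) / eD mu y2))) / (n:ℝ) ^ 2 := by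
      rw [hx2, hy1def, hy2def]
      field_simp
      ring
    have hnum : 0 ≤ 3 / 2 * (1 / 2) - (2 * mu * y1 * (eD mu (-y1) / eD mu y1)
        - 2 * mu * y2 * (eD mu (-y2) / eD mu y2)) := by linarith
    have hfin : 0 ≤ (3 / 2 * (1 / 2) - (2 * mu * y1 * (eD mu (-y1) / eD mu y1)
        - 2 * mu * y2 * (eD mu (-y2) / eD mu y2))) / (n:ℝ) ^ 2 :=
      div_nonneg hnum (by positivity)
    linarith [hdiff, hfin]
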